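/- arXiv:1807.05819 — 3 statements merged into one kernel-verified Lean document; each statement's English description precedes it below -/
import Mathlib

section
/- Fix $\sigma > 0$ and let $\mu$ be the Cauchy distribution on $\mathbb{R}$ with location $0$ and scale $\sigma$, i.e., the probability measure with density $x \mapsto \left(\pi\sigma(1 + x^2/\sigma^2)\right)^{-1}$ with respect to Lebesgue measure. Then the pushforward of $\mu$ under the map $\beta \mapsto \beta/\sqrt{\beta^2 + \sigma^2}$ is the probability measure on $(-1,1)$ with density $\rho \mapsto \frac{1}{\pi\sqrt{1-\rho^2}}$ with respect to Lebesgue measure; equivalently, it is the $\mathrm{beta}(1/2,1/2)$ distribution linearly rescaled from $(0,1)$ to the interval $(-1,1)$. -/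
open Real MeasureTheory Set

lemma lintegral_image_eq_lintegral_abs_deriv_mul' {s : Set ℝ} {f : ℝ → ℝ} {f' : ℝ → ℝ}
    (hs : MeasurableSet s) (hf' : ∀ x ∈ s, HasDerivWithinAt f (f' x) s x)
    (hf : InjOn f s) (g : ℝ → ENNReal) :
    ∫⁻ x in f '' s, g x = ∫⁻ x in s, ENNReal.ofReal |f' x| * g (f x) := by
  simpa only [ContinuousLinearMap.det_toSpanSingleton] using
    lintegral_image_eq_lintegral_abs_det_fderiv_mul volume hs
      (fun x hx => (hf' x hx).hasFDerivWithinAt) hf g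

lemma f_hasDerivAt {σ : ℝ} (hσ : 0 < σ) (x : ℝ) :
    HasDerivAt (fun β : ℝ => β / Real.sqrt (β ^ 2 + σ ^ 2))
      (σ ^ 2 / ((x ^ 2 + σ ^ 2) * Real.sqrt (x ^ 2 + σ ^ 2))) x := by
  have hpos : 0 < x ^ 2 + σ ^ 2 := by positivity
  have hsq : Real.sqrt (x ^ 2 + σ ^ 2) ≠ 0 := by positivity
  have h1 : HasDerivAt (fun β : ℝ => β ^ 2 + σ ^ 2) (2 * x) x := by
    simpa using ((hasDerivAt_pow 2 x).add_const (σ ^ 2))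
  have h2 : HasDerivAt (fun β : ℝ => Real.sqrt (β ^ 2 + σ ^ 2))
      (1 / (2 * Real.sqrt (x ^ 2 + σ ^ 2)) * (2 * x)) x :=
    (Real.hasDerivAt_sqrt hpos.ne').comp x h1
  have h3 := (hasDerivAt_id' x).fun_div h2 hsq
  refine h3.congr_deriv ?_
  symm
  have hs2 : Real.sqrt (x ^ 2 + σ ^ 2) ^ 2 = x ^ 2 + σ ^ 2 := Real.sq_sqrt hpos.le
  field_simp
  linear_combination (-x^2) * hs2

lemma f_strictMono {σ : ℝ} (hσ : 0 < σ) :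
    StrictMono (fun β : ℝ => β / Real.sqrt (β ^ 2 + σ ^ 2)) := by
  apply strictMono_of_deriv_pos
  intro x
  rw [(f_hasDerivAt hσ x).deriv]
  have hpos : 0 < x ^ 2 + σ ^ 2 := by positivity
  positivity

lemma f_range {σ : ℝ} (hσ : 0 < σ) :
    Set.range (fun β : ℝ => β / Real.sqrt (β ^ 2 + σ ^ 2)) = Set.Ioo (-1 : ℝ) 1 := by
  ext ρ
  constructor
  · rintro ⟨x, rfl⟩
    have hpos : 0 < x ^ 2 + σ ^ 2 := by positivity
    have ht : 0 < Real.sqrt (x ^ 2 + σ ^ 2) := Real.sqrt_pos.2 hpos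
    have habs : |x| < Real.sqrt (x ^ 2 + σ ^ 2) := by
      rw [← Real.sqrt_sq_eq_abs]
      exact Real.sqrt_lt_sqrt (by positivity) (by nlinarith)
    have h1 := abs_lt.1 habs
    constructor
    · rw [lt_div_iff₀ ht]; linarith
    · rw [div_lt_one ht]; linarith
  · rintro ⟨h1, h2⟩
    have hρ2 : 0 < 1 - ρ ^ 2 := by nlinarith
    set u := Real.sqrt (1 - ρ ^ 2) with hu
    have hu0 : 0 < u := Real.sqrt_pos.2 hρ2
    have hu2 : u ^ 2 = 1 - ρ ^ 2 := Real.sq_sqrt hρ2.le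
    refine ⟨σ * ρ / u, ?_⟩
    have hx2 : (σ * ρ / u) ^ 2 + σ ^ 2 = (σ / u) ^ 2 := by
      field_simp
      linear_combination hu2
    show (σ * ρ / u) / Real.sqrt ((σ * ρ / u) ^ 2 + σ ^ 2) = ρ
    rw [hx2, Real.sqrt_sq (by positivity)]
    field_simp

lemma density_identity {σ : ℝ} (hσ : 0 < σ) (x : ℝ) :
    |σ ^ 2 / ((x ^ 2 + σ ^ 2) * Real.sqrt (x ^ 2 + σ ^ 2))| *
      (1 / (π * Real.sqrt (1 - (x / Real.sqrt (x ^ 2 + σ ^ 2)) ^ 2))) =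
    1 / (π * σ * (1 + x ^ 2 / σ ^ 2)) := by
  have hpos : 0 < x ^ 2 + σ ^ 2 := by positivity
  have ht : 0 < Real.sqrt (x ^ 2 + σ ^ 2) := Real.sqrt_pos.2 hpos
  have ht2 : Real.sqrt (x ^ 2 + σ ^ 2) ^ 2 = x ^ 2 + σ ^ 2 := Real.sq_sqrt hpos.le
  have h1 : 1 - (x / Real.sqrt (x ^ 2 + σ ^ 2)) ^ 2 = (σ / Real.sqrt (x ^ 2 + σ ^ 2)) ^ 2 := by
    field_simp
    linarith [ht2]
  rw [h1, Real.sqrt_sq (by positivity), abs_of_pos (by positivity)]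
  have hπ := Real.pi_pos
  field_simp
  ring

/-- The pushforward of the Cauchy distribution with location 0 and scale `σ` under
the map `β ↦ β / √(β² + σ²)` is the distribution on `(-1,1)` with density
`ρ ↦ 1/(π √(1-ρ²))`, i.e. the beta(1/2,1/2) distribution rescaled to `(-1,1)`
(Appendix A of Mulder & Gelissen, 2018). -/
theorem cauchy_pushforward_is_beta_half_half
    (σ : ℝ) (hσ : 0 < σ) (μ : Measure ℝ)
    (hμ : μ = volume.withDensity fun x : ℝ =>
      ENNReal.ofReal (1 / (π * σ * (1 + x ^ 2 / σ ^ 2)))) :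
    Measure.map (fun β : ℝ => β / Real.sqrt (β ^ 2 + σ ^ 2)) μ =
      volume.withDensity fun ρ : ℝ =>
        ENNReal.ofReal
          (Set.indicator (Set.Ioo (-1 : ℝ) 1) (fun ρ' => 1 / (π * Real.sqrt (1 - ρ' ^ 2))) ρ) := by
  subst hμ
  set f : ℝ → ℝ := fun β : ℝ => β / Real.sqrt (β ^ 2 + σ ^ 2) with hf
  have hcont : Continuous f := by
    apply Continuous.div continuous_id (by fun_prop)
    intro x
    have : 0 < x ^ 2 + σ ^ 2 := by positivity
    positivity
  have hmeas : Measurable f := hcont.measurable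
  ext A hA
  rw [Measure.map_apply hmeas hA, withDensity_apply _ (hmeas hA), withDensity_apply _ hA]
  -- rewrite RHS indicator
  have hRHS : ∫⁻ ρ in A, ENNReal.ofReal
      (Set.indicator (Set.Ioo (-1 : ℝ) 1) (fun ρ' => 1 / (π * Real.sqrt (1 - ρ' ^ 2))) ρ)
      = ∫⁻ ρ in A ∩ Set.Ioo (-1 : ℝ) 1, ENNReal.ofReal (1 / (π * Real.sqrt (1 - ρ ^ 2))) := by
    have heq : ∀ ρ : ℝ, ENNReal.ofReal
        (Set.indicator (Set.Ioo (-1 : ℝ) 1) (fun ρ' => 1 / (π * Real.sqrt (1 - ρ' ^ 2))) ρ)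
        = Set.indicator (Set.Ioo (-1 : ℝ) 1)
            (fun ρ' => ENNReal.ofReal (1 / (π * Real.sqrt (1 - ρ' ^ 2)))) ρ := fun ρ => by
      by_cases h : ρ ∈ Set.Ioo (-1 : ℝ) 1 <;>
        simp [Set.indicator_of_mem, Set.indicator_of_notMem, h]
    simp_rw [heq]
    rw [lintegral_indicator measurableSet_Ioo, Measure.restrict_restrict measurableSet_Ioo,
      Set.inter_comm]
  rw [hRHS]
  have himg : A ∩ Set.Ioo (-1 : ℝ) 1 = f '' (f ⁻¹' A) := by
    rw [Set.image_preimage_eq_inter_range, f_range hσ]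
  rw [himg, lintegral_image_eq_lintegral_abs_deriv_mul' (hmeas hA)
    (fun x _ => ((f_hasDerivAt hσ x).hasDerivWithinAt))
    ((f_strictMono hσ).injective.injOn)]
  apply lintegral_congr
  intro x
  rw [← ENNReal.ofReal_mul (abs_nonneg _), density_identity hσ x]
end

section
/- Fix $\sigma > 0$ and let $\nu$ be the uniform distribution on the interval $(-1,1)$ (density $1/2$ with respect to Lebesgue measure). Then the pushforward of $\nu$ under the map $\rho \mapsto \rho(1-\rho^2)^{-1/2}\sigma$ is the probability measure on $\mathbb{R}$ with density $\beta \mapsto \frac{1}{2\sigma}\left(1 + \beta^2/\sigma^2\right)^{-3/2}$; equivalently, it is the Student-$t$ distribution with location $0$, squared scale $\sigma^2/2$, and $2$ degrees of freedom. -/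
open Real MeasureTheory Set

private lemma rpow_neg_half_eq (x : ℝ) (hx : 0 ≤ x) :
    x ^ (-(1 : ℝ)/2) = (Real.sqrt x)⁻¹ := by
  rw [Real.sqrt_eq_rpow, ← Real.rpow_neg hx, neg_div]

private lemma aux_hasDerivAt {σ : ℝ} (hσ : 0 < σ) (β : ℝ) :
    HasDerivAt (fun b : ℝ => b / Real.sqrt (σ ^ 2 + b ^ 2))
      (σ ^ 2 / ((σ ^ 2 + β ^ 2) * Real.sqrt (σ ^ 2 + β ^ 2))) β := by
  have hpos : 0 < σ ^ 2 + β ^ 2 := by positivity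
  have hr : 0 < Real.sqrt (σ ^ 2 + β ^ 2) := Real.sqrt_pos.mpr hpos
  have d1 : HasDerivAt (fun b : ℝ => σ ^ 2 + b ^ 2) (2 * β) β := by
    simpa using (hasDerivAt_pow 2 β).const_add (σ ^ 2)
  have d2 : HasDerivAt (fun b : ℝ => Real.sqrt (σ ^ 2 + b ^ 2))
      (2 * β / (2 * Real.sqrt (σ ^ 2 + β ^ 2))) β := d1.sqrt (ne_of_gt hpos)
  have d3 := (hasDerivAt_id β).div d2 (ne_of_gt hr)
  refine (d3 : HasDerivAt (fun b : ℝ => b / Real.sqrt (σ ^ 2 + b ^ 2)) _ β).congr_deriv (Eq.symm ?_)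
  have h2 : Real.sqrt (σ ^ 2 + β ^ 2) ^ 2 = σ ^ 2 + β ^ 2 := Real.sq_sqrt hpos.le
  simp only [id]
  field_simp
  linear_combination (-β ^ 2) * h2

private lemma aux_strictMono {σ : ℝ} (hσ : 0 < σ) :
    StrictMono (fun b : ℝ => b / Real.sqrt (σ ^ 2 + b ^ 2)) := by
  apply strictMono_of_deriv_pos
  intro x
  rw [(aux_hasDerivAt hσ x).deriv]
  have hpos : 0 < σ ^ 2 + x ^ 2 := by positivity
  have hr : 0 < Real.sqrt (σ ^ 2 + x ^ 2) := Real.sqrt_pos.mpr hpos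
  positivity

private lemma aux_mem {σ : ℝ} (hσ : 0 < σ) (β : ℝ) :
    β / Real.sqrt (σ ^ 2 + β ^ 2) ∈ Ioo (-1 : ℝ) 1 := by
  have hpos : 0 < σ ^ 2 + β ^ 2 := by positivity
  have hr : 0 < Real.sqrt (σ ^ 2 + β ^ 2) := Real.sqrt_pos.mpr hpos
  have habs : |β| < Real.sqrt (σ ^ 2 + β ^ 2) := by
    rw [← Real.sqrt_sq_eq_abs]
    exact Real.sqrt_lt_sqrt (sq_nonneg β) (by nlinarith)
  have h1 := abs_lt.mp habs
  constructor
  · rw [lt_div_iff₀ hr]; nlinarith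
  · rw [div_lt_one hr]; exact h1.2

private lemma aux_g_h {σ : ℝ} (hσ : 0 < σ) (β : ℝ) :
    (β / Real.sqrt (σ ^ 2 + β ^ 2)) *
      (1 - (β / Real.sqrt (σ ^ 2 + β ^ 2)) ^ 2) ^ (-(1 : ℝ)/2) * σ = β := by
  have hpos : 0 < σ ^ 2 + β ^ 2 := by positivity
  have hr : 0 < Real.sqrt (σ ^ 2 + β ^ 2) := Real.sqrt_pos.mpr hpos
  have hr2 : Real.sqrt (σ ^ 2 + β ^ 2) ^ 2 = σ ^ 2 + β ^ 2 := Real.sq_sqrt hpos.le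
  have h1 : 1 - (β / Real.sqrt (σ ^ 2 + β ^ 2)) ^ 2 = σ ^ 2 / (σ ^ 2 + β ^ 2) := by
    rw [div_pow, hr2]
    field_simp
    ring
  rw [h1, rpow_neg_half_eq _ (by positivity),
    Real.sqrt_div (sq_nonneg σ), Real.sqrt_sq hσ.le]
  field_simp

private lemma aux_h_g {σ : ℝ} (hσ : 0 < σ) {ρ : ℝ} (hρ : ρ ∈ Ioo (-1 : ℝ) 1) :
    (ρ * (1 - ρ ^ 2) ^ (-(1 : ℝ)/2) * σ) /
      Real.sqrt (σ ^ 2 + (ρ * (1 - ρ ^ 2) ^ (-(1 : ℝ)/2) * σ) ^ 2) = ρ := by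
  have hu : 0 < 1 - ρ ^ 2 := by nlinarith [hρ.1, hρ.2]
  have hsu : 0 < Real.sqrt (1 - ρ ^ 2) := Real.sqrt_pos.mpr hu
  have hsu2 : Real.sqrt (1 - ρ ^ 2) ^ 2 = 1 - ρ ^ 2 := Real.sq_sqrt hu.le
  rw [rpow_neg_half_eq _ hu.le]
  have h2 : σ ^ 2 + (ρ * (Real.sqrt (1 - ρ ^ 2))⁻¹ * σ) ^ 2 = σ ^ 2 / (1 - ρ ^ 2) := by
    field_simp
    nlinarith [hsu2]
  rw [h2, Real.sqrt_div (sq_nonneg σ), Real.sqrt_sq hσ.le]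
  field_simp

private lemma aux_density_eq {σ : ℝ} (hσ : 0 < σ) (x : ℝ) :
    1 / (2 * σ) * (1 + x ^ 2 / σ ^ 2) ^ (-(3 : ℝ)/2)
      = 1 / 2 * (σ ^ 2 / ((σ ^ 2 + x ^ 2) * Real.sqrt (σ ^ 2 + x ^ 2))) := by
  have hpos : 0 < σ ^ 2 + x ^ 2 := by positivity
  have hr : 0 < Real.sqrt (σ ^ 2 + x ^ 2) := Real.sqrt_pos.mpr hpos
  have hr2 : Real.sqrt (σ ^ 2 + x ^ 2) ^ 2 = σ ^ 2 + x ^ 2 := Real.sq_sqrt hpos.le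
  have hp : 1 + x ^ 2 / σ ^ 2 = (σ ^ 2 + x ^ 2) / σ ^ 2 := by field_simp
  have hp2 : (0 : ℝ) < (σ ^ 2 + x ^ 2) / σ ^ 2 := by positivity
  rw [hp, show (-(3 : ℝ)/2) = -((1 : ℝ) + 1/2) by norm_num, Real.rpow_neg hp2.le,
    Real.rpow_add hp2, Real.rpow_one, ← Real.sqrt_eq_rpow,
    Real.sqrt_div hpos.le, Real.sqrt_sq hσ.le]
  rw [mul_inv, one_div, mul_inv]
  field_simp

/-- The pushforward of the uniform distribution on `(-1,1)` under the map
`ρ ↦ ρ (1-ρ²)^{-1/2} σ` is the Student-t distribution with location 0, squared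
scale `σ²/2`, and 2 degrees of freedom, i.e. the distribution on `ℝ` with density
`β ↦ (2σ)⁻¹ (1 + β²/σ²)^{-3/2}` (Appendix A of Mulder & Gelissen, 2018). -/
theorem uniform_pushforward_is_student_t_two_df
    (σ : ℝ) (hσ : 0 < σ) (ν : Measure ℝ)
    (hν : ν = volume.withDensity fun ρ : ℝ =>
      ENNReal.ofReal (Set.indicator (Set.Ioo (-1 : ℝ) 1) (fun _ => (1 : ℝ) / 2) ρ)) :
    Measure.map (fun ρ : ℝ => ρ * (1 - ρ ^ 2) ^ (-(1 : ℝ) / 2) * σ) ν =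
      volume.withDensity fun β : ℝ =>
        ENNReal.ofReal (1 / (2 * σ) * (1 + β ^ 2 / σ ^ 2) ^ (-(3 : ℝ) / 2)) := by
  subst hν
  set g : ℝ → ℝ := fun ρ : ℝ => ρ * (1 - ρ ^ 2) ^ (-(1 : ℝ) / 2) * σ with hg_def
  set h : ℝ → ℝ := fun b : ℝ => b / Real.sqrt (σ ^ 2 + b ^ 2) with hh_def
  have hgm : Measurable g := by
    rw [hg_def]; measurability
  refine Measure.ext fun s hs => ?_
  rw [Measure.map_apply hgm hs, withDensity_apply _ (hgm hs), withDensity_apply _ hs]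
  -- LHS: rewrite the indicator density
  have hind : ∀ x : ℝ,
      ENNReal.ofReal (Set.indicator (Set.Ioo (-1 : ℝ) 1) (fun _ => (1 : ℝ) / 2) x)
        = Set.indicator (Set.Ioo (-1 : ℝ) 1) (fun _ => ENNReal.ofReal ((1 : ℝ) / 2)) x := by
    intro x
    by_cases hx : x ∈ Set.Ioo (-1 : ℝ) 1 <;> simp [hx]
  simp_rw [hind]
  rw [lintegral_indicator measurableSet_Ioo _, Measure.restrict_restrict measurableSet_Ioo,
    setLIntegral_const]
  -- the preimage set equals the image of `s` under `h`
  have hset : Set.Ioo (-1 : ℝ) 1 ∩ g ⁻¹' s = h '' s := by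
    ext x
    constructor
    · rintro ⟨hx1, hx2⟩
      exact ⟨g x, hx2, aux_h_g hσ hx1⟩
    · rintro ⟨β, hβ, rfl⟩
      refine ⟨aux_mem hσ β, ?_⟩
      show g (h β) ∈ s
      have key : g (h β) = β := by
        simp only [hg_def, hh_def]
        exact aux_g_h hσ β
      rw [key]; exact hβ
  rw [hset]
  -- change of variables for the volume of `h '' s`
  have hderiv : ∀ x ∈ s, HasDerivWithinAt h
      (σ ^ 2 / ((σ ^ 2 + x ^ 2) * Real.sqrt (σ ^ 2 + x ^ 2))) s x :=
    fun x _ => (aux_hasDerivAt hσ x).hasDerivWithinAt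
  have hinj : Set.InjOn h s := (aux_strictMono hσ).injective.injOn
  have hcv := lintegral_image_eq_lintegral_abs_det_fderiv_mul volume hs
    (fun x hx => (hderiv x hx).hasFDerivWithinAt) hinj (fun _ => (1 : ENNReal))
  simp only [ContinuousLinearMap.det_toSpanSingleton, mul_one] at hcv
  rw [setLIntegral_one] at hcv
  rw [hcv, ← lintegral_const_mul' _ _ (by simp : ENNReal.ofReal ((1:ℝ)/2) ≠ ⊤)]
  -- pointwise equality of the densities
  refine setLIntegral_congr_fun hs (fun x _ => ?_)
  have hpos : 0 < σ ^ 2 + x ^ 2 := by positivity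
  have hr : 0 < Real.sqrt (σ ^ 2 + x ^ 2) := Real.sqrt_pos.mpr hpos
  have habs : |σ ^ 2 / ((σ ^ 2 + x ^ 2) * Real.sqrt (σ ^ 2 + x ^ 2))|
      = σ ^ 2 / ((σ ^ 2 + x ^ 2) * Real.sqrt (σ ^ 2 + x ^ 2)) :=
    abs_of_pos (by positivity)
  rw [habs, ← ENNReal.ofReal_mul (by norm_num), ← aux_density_eq hσ x]
end

section
/- The set $\mathcal{C}_u = \left\{ (\rho_{21}, \rho_{31}, \rho_{32}) \in \mathbb{R}^3 : \begin{pmatrix} 1 & \rho_{21} & \rho_{31} \\ \rho_{21} & 1 & \rho_{32} \\ \rho_{31} & \rho_{32} & 1 \end{pmatrix} \text{ is positive definite} \right\}$ has three-dimensional Lebesgue measure equal to $\pi^2/2$ (numerically $4.934802\ldots$). -/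
open Real MeasureTheory Set Matrix

private lemma quad_eval (x y z a b c : ℝ) :
    dotProduct (star ![a, b, c])
        ((!![1, x, y; x, 1, z; y, z, 1] : Matrix (Fin 3) (Fin 3) ℝ) *ᵥ ![a, b, c]) =
      a ^ 2 + b ^ 2 + c ^ 2 + 2 * x * a * b + 2 * y * a * c + 2 * z * b * c := by
  simp [Matrix.mulVec, dotProduct, Fin.sum_univ_three, Matrix.vecHead, Matrix.vecTail]
  ring

private lemma posDef_iff_sq (x y z : ℝ) :
    (!![1, x, y; x, 1, z; y, z, 1] : Matrix (Fin 3) (Fin 3) ℝ).PosDef ↔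
      x ^ 2 < 1 ∧ y ^ 2 < 1 ∧ (z - x * y) ^ 2 < (1 - x ^ 2) * (1 - y ^ 2) := by
  constructor
  · intro hP
    have hx : x ^ 2 < 1 := by
      have h := hP.dotProduct_mulVec_pos (x := ![1, -x, 0]) (by
        intro h; simpa using congrFun h 0)
      rw [quad_eval] at h; nlinarith
    have hy : y ^ 2 < 1 := by
      have h := hP.dotProduct_mulVec_pos (x := ![1, 0, -y]) (by
        intro h; simpa using congrFun h 0)
      rw [quad_eval] at h; nlinarith
    refine ⟨hx, hy, ?_⟩
    have h := hP.dotProduct_mulVec_pos (x := ![-(x * (-(z - x * y)) + y * (1 - x ^ 2)), -(z - x * y), 1 - x ^ 2]) (by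
      intro h
      have h2 := congrFun h 2
      simp at h2
      nlinarith)
    rw [quad_eval] at h
    nlinarith [sq_nonneg (z - x * y)]
  · rintro ⟨hx, hy, hz⟩
    rw [posDef_iff_dotProduct_mulVec]
    constructor
    · ext i j
      fin_cases i <;> fin_cases j <;> simp [Matrix.conjTranspose, Matrix.vecHead, Matrix.vecTail]
    · intro v hv
      have hvne : ¬(v 0 = 0 ∧ v 1 = 0 ∧ v 2 = 0) := by
        rintro ⟨h0, h1, h2⟩
        apply hv
        funext i
        fin_cases i <;> assumption
      set a := v 0; set b := v 1; set c := v 2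
      have hQ : dotProduct (star v)
          ((!![1, x, y; x, 1, z; y, z, 1] : Matrix (Fin 3) (Fin 3) ℝ) *ᵥ v) =
          a ^ 2 + b ^ 2 + c ^ 2 + 2 * x * a * b + 2 * y * a * c + 2 * z * b * c := by
        simp [Matrix.mulVec, dotProduct, Fin.sum_univ_three, Matrix.vecHead, Matrix.vecTail, a, b, c]
        ring
      rw [hQ]
      have hx' : (0 : ℝ) < 1 - x ^ 2 := by linarith
      by_cases hc : c = 0
      · by_cases hb : b = 0
        · have ha : a ≠ 0 := by tauto
          have : 0 < a ^ 2 := by positivity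
          rw [hb, hc]; nlinarith
        · have : 0 < b ^ 2 := by positivity
          rw [hc]
          nlinarith [sq_nonneg (a + x * b)]
      · have hc2 : 0 < c ^ 2 := by positivity
        nlinarith [sq_nonneg (a + x * b + y * c),
          sq_nonneg ((1 - x ^ 2) * b + (z - x * y) * c),
          mul_pos (sub_pos.2 hz) hc2,
          mul_nonneg hx'.le (sq_nonneg (a + x * b + y * c))]

private lemma posDef_iff_mem (x y z : ℝ) :
    (!![1, x, y; x, 1, z; y, z, 1] : Matrix (Fin 3) (Fin 3) ℝ).PosDef ↔
      (x ∈ Ioo (-1 : ℝ) 1 ∧ y ∈ Ioo (-1 : ℝ) 1) ∧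
        z ∈ Ioo (x * y - √(1 - x ^ 2) * √(1 - y ^ 2))
          (x * y + √(1 - x ^ 2) * √(1 - y ^ 2)) := by
  rw [posDef_iff_sq]
  constructor
  · rintro ⟨hx, hy, hz⟩
    have hx1 : (0 : ℝ) ≤ 1 - x ^ 2 := by linarith
    have hy1 : (0 : ℝ) ≤ 1 - y ^ 2 := by linarith
    have hs : √(1 - x ^ 2) * √(1 - y ^ 2) ≥ 0 :=
      mul_nonneg (Real.sqrt_nonneg _) (Real.sqrt_nonneg _)
    have hss : (√(1 - x ^ 2) * √(1 - y ^ 2)) ^ 2 = (1 - x ^ 2) * (1 - y ^ 2) := by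
      rw [mul_pow, Real.sq_sqrt hx1, Real.sq_sqrt hy1]
    refine ⟨⟨⟨?_, ?_⟩, ⟨?_, ?_⟩⟩, ?_, ?_⟩ <;> nlinarith
  · rintro ⟨⟨hx, hy⟩, hz1, hz2⟩
    have hx1 : (0 : ℝ) ≤ 1 - x ^ 2 := by nlinarith [hx.1, hx.2]
    have hy1 : (0 : ℝ) ≤ 1 - y ^ 2 := by nlinarith [hy.1, hy.2]
    have hss : (√(1 - x ^ 2) * √(1 - y ^ 2)) ^ 2 = (1 - x ^ 2) * (1 - y ^ 2) := by
      rw [mul_pow, Real.sq_sqrt hx1, Real.sq_sqrt hy1]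
    refine ⟨by nlinarith [hx.1, hx.2], by nlinarith [hy.1, hy.2], ?_⟩
    nlinarith [mul_pos (sub_pos.2 hz2) (sub_pos.2 hz1)]

/-- The volume of the 3-dimensional elliptope, i.e. the set of `(ρ₂₁, ρ₃₁, ρ₃₂)` for
which the `3 × 3` symmetric matrix with unit diagonal is positive definite, equals
`π²/2 ≈ 4.934802` (Joe, 2006; used in Mulder & Gelissen, 2018). -/
theorem volume_elliptope_three :
    volume {ρ : Fin 3 → ℝ |
        (!![1, ρ 0, ρ 1; ρ 0, 1, ρ 2; ρ 1, ρ 2, 1] : Matrix (Fin 3) (Fin 3) ℝ).PosDef} =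
      ENNReal.ofReal (π ^ 2 / 2) := by
  set f : ℝ × ℝ → ℝ := fun p => p.1 * p.2 - √(1 - p.1 ^ 2) * √(1 - p.2 ^ 2) with hf
  set g : ℝ × ℝ → ℝ := fun p => p.1 * p.2 + √(1 - p.1 ^ 2) * √(1 - p.2 ^ 2) with hg
  set s : Set (ℝ × ℝ) := Ioo (-1 : ℝ) 1 ×ˢ Ioo (-1 : ℝ) 1 with hsdef
  have hfc : Continuous f := by fun_prop
  have hgc : Continuous g := by fun_prop
  have hs : MeasurableSet s := measurableSet_Ioo.prod measurableSet_Ioo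
  have hsub : s ⊆ Icc (-1 : ℝ) 1 ×ˢ Icc (-1 : ℝ) 1 :=
    Set.prod_mono Ioo_subset_Icc_self Ioo_subset_Icc_self
  have hfi : IntegrableOn f s volume :=
    (hfc.locallyIntegrable.integrableOn_isCompact (isCompact_Icc.prod isCompact_Icc)).mono_set hsub
  have hgi : IntegrableOn g s volume :=
    (hgc.locallyIntegrable.integrableOn_isCompact (isCompact_Icc.prod isCompact_Icc)).mono_set hsub
  have hfg : ∀ p ∈ s, f p ≤ g p := by
    intro p _
    have : 0 ≤ √(1 - p.1 ^ 2) * √(1 - p.2 ^ 2) :=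
      mul_nonneg (Real.sqrt_nonneg _) (Real.sqrt_nonneg _)
    simp only [f, g]; linarith
  -- measure preserving map
  have e1 := volume_preserving_piFinSuccAbove (fun _ : Fin 3 => ℝ) 0
  have e2 := (MeasurePreserving.id (volume : Measure ℝ)).prod
    (volume_preserving_finTwoArrow ℝ)
  have e3 := MeasurePreserving.symm (MeasurableEquiv.prodAssoc
      (α := ℝ) (β := ℝ) (γ := ℝ))
    (volume_preserving_prodAssoc (α₁ := ℝ) (β₁ := ℝ) (γ₁ := ℝ))
  have hmp : MeasurePreserving (fun ρ : Fin 3 → ℝ => ((ρ 0, ρ 1), ρ 2))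
      volume volume := by
    have hcomp := e3.comp (e2.comp e1)
    have hfun : ((⇑(MeasurableEquiv.prodAssoc (α := ℝ) (β := ℝ) (γ := ℝ)).symm) ∘
        (Prod.map id ⇑(MeasurableEquiv.finTwoArrow (α := ℝ))) ∘
        ⇑(MeasurableEquiv.piFinSuccAbove (fun _ : Fin 3 => ℝ) 0)) =
        fun ρ : Fin 3 → ℝ => ((ρ 0, ρ 1), ρ 2) := by
      funext ρ
      simp [MeasurableEquiv.prodAssoc, MeasurableEquiv.piFinSuccAbove,
        MeasurableEquiv.finTwoArrow, Fin.succAbove, Fin.tail]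
    rwa [hfun] at hcomp
  have hset : {ρ : Fin 3 → ℝ |
      (!![1, ρ 0, ρ 1; ρ 0, 1, ρ 2; ρ 1, ρ 2, 1] : Matrix (Fin 3) (Fin 3) ℝ).PosDef} =
      (fun ρ : Fin 3 → ℝ => ((ρ 0, ρ 1), ρ 2)) ⁻¹' regionBetween f g s := by
    ext ρ
    simpa [regionBetween, hsdef, hf, hg, Set.mem_prod] using
      posDef_iff_mem (ρ 0) (ρ 1) (ρ 2)
  rw [hset, hmp.measure_preimage
    (measurableSet_regionBetween hfc.measurable hgc.measurable hs).nullMeasurableSet]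
  have hvol : (volume : Measure ((ℝ × ℝ) × ℝ)) = (volume : Measure (ℝ × ℝ)).prod volume :=
    rfl
  rw [hvol, volume_regionBetween_eq_integral hfi hgi hs hfg]
  congr 1
  have hbase : ∫ t in Ioo (-1 : ℝ) 1, √(1 - t ^ 2) = π / 2 := by
    rw [← MeasureTheory.integral_Ioc_eq_integral_Ioo,
      ← intervalIntegral.integral_of_le (by norm_num : (-1 : ℝ) ≤ 1)]
    exact integral_sqrt_one_sub_sq
  have : ∫ p in s, (g - f) p =
      ∫ p in Ioo (-1 : ℝ) 1 ×ˢ Ioo (-1 : ℝ) 1,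
        (fun t => 2 * √(1 - t ^ 2)) p.1 * (fun t => √(1 - t ^ 2)) p.2 := by
    apply setIntegral_congr_fun hs
    intro p _
    simp only [Pi.sub_apply, f, g]
    ring
  rw [this, show (volume : Measure (ℝ × ℝ)) = (volume : Measure ℝ).prod volume from rfl]
  have hsplit := MeasureTheory.setIntegral_prod_mul (μ := (volume : Measure ℝ))
    (ν := (volume : Measure ℝ)) (fun t : ℝ => 2 * √(1 - t ^ 2))
    (fun t : ℝ => √(1 - t ^ 2)) (Ioo (-1 : ℝ) 1) (Ioo (-1 : ℝ) 1)
  rw [hsplit, MeasureTheory.integral_const_mul, hbase]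
  ring
end
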